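/- arXiv:2503.00970 — 2 statements merged into one kernel-verified Lean document; each statement's English description precedes it below -/
import Mathlib

section
/- Let C ⊆ ℝⁿ be a pointed n-dimensional closed convex cone, ω ⊆ Ω = S^{n-1} ∩ int C° a nonempty compact set, K, L ∈ 𝒦(C,ω), p ∈ (0,1], and t ∈ [0,1]. Then log γⁿ(C ∩ ⋂_{u∈ω} {y : ⟨y,u⟩ ≤ −((1−t)(−h_K(u))^p + t(−h_L(u))^p)^{1/p}}) ≥ (1−t) log γⁿ(K) + t log γⁿ(L); that is, the Gaussian measure of the Wulff shape of the p-mean ((1−t)ĥ_K^p + tĥ_L^p)^{1/p} is at least γⁿ(K)^{1−t} γⁿ(L)^t. -/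
open MeasureTheory Metric Set Filter
open scoped RealInnerProductSpace Pointwise Topology ENNReal

noncomputable section

/-- `ℝⁿ` as Euclidean space. -/
abbrev En (n : ℕ) := EuclideanSpace ℝ (Fin n)

/-- The standard Gaussian measure of a set `A ⊆ ℝⁿ`:
`γⁿ(A) = (2π)^{-n/2} ∫_A e^{-‖x‖²/2} dx`. -/
def gaussianMeasure (n : ℕ) (A : Set (En n)) : ℝ :=
  (2 * Real.pi) ^ (-(n : ℝ) / 2) * ∫ x in A, Real.exp (-‖x‖ ^ 2 / 2)

/-- A pointed (no lines), `n`-dimensional (nonempty interior), closed convex cone. -/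
def IsPointedCone {n : ℕ} (C : Set (En n)) : Prop :=
  IsClosed C ∧ Convex ℝ C ∧ (∀ x ∈ C, ∀ c : ℝ, 0 ≤ c → c • x ∈ C) ∧
    (interior C).Nonempty ∧ ∀ x ∈ C, -x ∈ C → x = 0

/-- The polar cone `C° = {x : ⟨x,y⟩ ≤ 0 ∀ y ∈ C}`. -/
def polarCone {n : ℕ} (C : Set (En n)) : Set (En n) := {x | ∀ y ∈ C, ⟪x, y⟫ ≤ 0}

/-- `Ω = S^{n-1} ∩ int C°`. -/
def OmegaSet {n : ℕ} (C : Set (En n)) : Set (En n) :=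
  sphere (0 : En n) 1 ∩ interior (polarCone C)

/-- A pseudo-cone: nonempty closed convex set not containing the origin with `λK ⊆ K` for `λ ≥ 1`. -/
def IsPseudoCone {n : ℕ} (K : Set (En n)) : Prop :=
  K.Nonempty ∧ IsClosed K ∧ Convex ℝ K ∧ (0 : En n) ∉ K ∧
    ∀ c : ℝ, 1 ≤ c → c • K ⊆ K

/-- The recession cone `rec K = {z : K + z ⊆ K}`. -/
def recessionCone {n : ℕ} (K : Set (En n)) : Set (En n) := {z | ∀ x ∈ K, x + z ∈ K}

/-- A `C`-pseudo-cone: a pseudo-cone whose recession cone is `C`. -/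
def IsCPseudoCone {n : ℕ} (C K : Set (En n)) : Prop :=
  IsPseudoCone K ∧ recessionCone K = C

/-- The support function `h_K(u) = sup {⟨x,u⟫ : x ∈ K}`. -/
def suppFn {n : ℕ} (K : Set (En n)) (u : En n) : ℝ := sSup ((fun x => ⟪x, u⟫) '' K)

/-- The Wulff shape `[f] = C ∩ ⋂_{u ∈ ω} {y : ⟨y,u⟩ ≤ -f(u)}`. -/
def wulffShape {n : ℕ} (C ω : Set (En n)) (f : En n → ℝ) : Set (En n) :=
  C ∩ ⋂ u ∈ ω, {y | ⟪y, u⟫ ≤ -f u}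

/-- `K ∈ 𝒦(C,ω)`: `K` is a `C`-pseudo-cone that is `C`-determined by `ω`. -/
def InKClass {n : ℕ} (C ω K : Set (En n)) : Prop :=
  IsCPseudoCone C K ∧ K = C ∩ ⋂ u ∈ ω, {y | ⟪y, u⟫ ≤ suppFn K u}

end


section PLAux
open scoped NNReal
open MeasureTheory Set Filter
open scoped Pointwise ENNReal NNReal Topology

/-- One-dimensional Brunn–Minkowski for nonempty compact sets. -/
lemma bm_one_dim (A B : Set ℝ) (hA : IsCompact A) (hB : IsCompact B)
    (hAne : A.Nonempty) (hBne : B.Nonempty) :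
    volume A + volume B ≤ volume (A + B) := by
  set a := sSup A with ha
  set b := sInf B with hb
  have haA : a ∈ A := hA.sSup_mem hAne
  have hbB : b ∈ B := hB.sInf_mem hBne
  set X : Set ℝ := (fun y => y + b) '' A with hX
  set Y : Set ℝ := (fun y => a + y) '' B with hY
  have hXm : volume X = volume A := by
    have : X = (fun y => y + (-b)) ⁻¹' A := by
      ext y
      constructor
      · rintro ⟨x, hx, rfl⟩; simpa using hx
      · intro hy; exact ⟨y - b, hy, by ring⟩
    rw [this, measure_preimage_add_right]
  have hYm : volume Y = volume B := by
    have : Y = (fun y => -a + y) ⁻¹' B := by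
      ext y
      constructor
      · rintro ⟨x, hx, rfl⟩; simpa using hx
      · intro hy; exact ⟨-a + y, hy, by ring⟩
    rw [this, measure_preimage_add]
  have hXY : X ∪ Y ⊆ A + B := by
    rintro z (⟨x, hx, rfl⟩ | ⟨y, hy, rfl⟩)
    · exact Set.add_mem_add hx hbB
    · exact Set.add_mem_add haA hy
  have hint : X ∩ Y ⊆ {a + b} := by
    rintro z ⟨⟨x, hx, rfl⟩, ⟨y, hy, hz⟩⟩
    have h1 : x ≤ a := le_csSup hA.bddAbove hx
    have h2 : b ≤ y := csInf_le hB.bddBelow hy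
    have : x + b = a + y := hz.symm
    have : x = a ∧ y = b := by constructor <;> linarith
    simp [this.1]
  have hYmeas : MeasurableSet Y := ((hB.image (continuous_add_left a))).measurableSet
  calc volume A + volume B = volume X + volume Y := by rw [hXm, hYm]
    _ = volume (X ∪ Y) + volume (X ∩ Y) := (measure_union_add_inter X hYmeas).symm
    _ ≤ volume (A + B) + volume {a + b} := by
        exact add_le_add (measure_mono hXY) (measure_mono hint)
    _ = volume (A + B) := by simp

/-- Layer-cake formula for `ℝ≥0∞`-valued functions. -/
lemma layercake_ennreal {α : Type*} [MeasurableSpace α] (μ : Measure α) [SigmaFinite μ]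
    (F : α → ℝ≥0∞) (hF : Measurable F) :
    ∫⁻ x, F x ∂μ = ∫⁻ s in Set.Ioi (0:ℝ), μ {x | ENNReal.ofReal s < F x} := by
  set T : Set (α × ℝ) := {p | ENNReal.ofReal p.2 < F p.1} with hT
  have hTmeas : MeasurableSet T :=
    measurableSet_lt (ENNReal.measurable_ofReal.comp measurable_snd) (hF.comp measurable_fst)
  have key : ∀ x, F x = ∫⁻ s in Set.Ioi (0:ℝ), T.indicator (fun _ => (1:ℝ≥0∞)) (x, s) := by
    intro x
    have hS : MeasurableSet {s : ℝ | ENNReal.ofReal s < F x} :=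
      measurableSet_lt ENNReal.measurable_ofReal measurable_const
    have : (fun s => T.indicator (fun _ => (1:ℝ≥0∞)) (x, s))
        = {s : ℝ | ENNReal.ofReal s < F x}.indicator (fun _ => (1:ℝ≥0∞)) := by
      ext s; simp [Set.indicator_apply, hT]
    rw [this, lintegral_indicator hS, setLIntegral_one, Measure.restrict_apply hS]
    by_cases hFx : F x = ∞
    · have : {s : ℝ | ENNReal.ofReal s < F x} ∩ Set.Ioi 0 = Set.Ioi 0 := by
        ext s; simp [hFx]
      rw [this, hFx, Real.volume_Ioi]
    · have : {s : ℝ | ENNReal.ofReal s < F x} ∩ Set.Ioi 0 = Set.Ioo 0 (F x).toReal := by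
        ext s
        simp only [Set.mem_inter_iff, Set.mem_setOf_eq, Set.mem_Ioi, Set.mem_Ioo]
        constructor
        · rintro ⟨h1, h2⟩
          exact ⟨h2, (ENNReal.ofReal_lt_iff_lt_toReal h2.le hFx).mp h1⟩
        · rintro ⟨h1, h2⟩
          exact ⟨(ENNReal.ofReal_lt_iff_lt_toReal h1.le hFx).mpr h2, h1⟩
      rw [this, Real.volume_Ioo, sub_zero, ENNReal.ofReal_toReal hFx]
  have hmeas : Measurable (fun p : α × ℝ => T.indicator (fun _ => (1:ℝ≥0∞)) p) :=
    measurable_const.indicator hTmeas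
  have hunc : AEMeasurable (Function.uncurry fun x s => T.indicator (fun _ => (1:ℝ≥0∞)) (x, s))
      (μ.prod (volume.restrict (Set.Ioi (0:ℝ)))) := by
    have : (Function.uncurry fun x s => T.indicator (fun _ => (1:ℝ≥0∞)) (x, s))
        = fun p : α × ℝ => T.indicator (fun _ => (1:ℝ≥0∞)) p := by
      ext p; rfl
    rw [this]; exact hmeas.aemeasurable
  calc ∫⁻ x, F x ∂μ
      = ∫⁻ x, (∫⁻ s in Set.Ioi (0:ℝ), T.indicator (fun _ => (1:ℝ≥0∞)) (x, s)) ∂μ := by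
        exact lintegral_congr key
    _ = ∫⁻ s in Set.Ioi (0:ℝ), ∫⁻ x, T.indicator (fun _ => (1:ℝ≥0∞)) (x, s) ∂μ := by
        exact lintegral_lintegral_swap hunc
    _ = ∫⁻ s in Set.Ioi (0:ℝ), μ {x | ENNReal.ofReal s < F x} := by
        refine lintegral_congr fun s => ?_
        have hS : MeasurableSet {x | ENNReal.ofReal s < F x} :=
          measurableSet_lt measurable_const hF
        have : (fun x => T.indicator (fun _ => (1:ℝ≥0∞)) (x, s))
            = {x | ENNReal.ofReal s < F x}.indicator (fun _ => (1:ℝ≥0∞)) := by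
          ext x; simp [Set.indicator_apply, hT]
        rw [this, lintegral_indicator hS, setLIntegral_one]

/-- Weighted AM-GM for two ENNReal numbers. -/
lemma ennreal_geom_mean_le (a b : ℝ≥0∞) {t : ℝ} (ht0 : 0 < t) (ht1 : t < 1) :
    a ^ (1 - t) * b ^ t ≤ ENNReal.ofReal (1 - t) * a + ENNReal.ofReal t * b := by
  have h1t : 0 < 1 - t := by linarith
  by_cases ha : a = ∞
  · by_cases hb : b = 0
    · simp [ha, hb, ENNReal.zero_rpow_of_pos ht0]
    · have : ENNReal.ofReal (1 - t) * a = ∞ := by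
        rw [ha, ENNReal.mul_top]
        simp [ENNReal.ofReal_eq_zero]; linarith
      rw [this]; exact le_top.trans (le_add_right le_rfl)
  by_cases hb : b = ∞
  · by_cases ha0 : a = 0
    · simp [hb, ha0, ENNReal.zero_rpow_of_pos h1t]
    · have : ENNReal.ofReal t * b = ∞ := by
        rw [hb, ENNReal.mul_top]
        simp [ENNReal.ofReal_eq_zero]; linarith
      rw [this]; exact le_top.trans (le_add_left le_rfl)
  · lift a to ℝ≥0 using ha
    lift b to ℝ≥0 using hb
    have key := NNReal.geom_mean_le_arith_mean2_weighted (Real.toNNReal (1 - t))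
      (Real.toNNReal t) a b (by
        rw [← Real.toNNReal_add (by linarith) ht0.le]
        norm_num)
    rw [← ENNReal.coe_rpow_of_nonneg _ h1t.le, ← ENNReal.coe_rpow_of_nonneg _ ht0.le,
      ← ENNReal.coe_mul]
    calc ((a ^ (1-t) * b ^ t : ℝ≥0) : ℝ≥0∞)
        ≤ ((Real.toNNReal (1 - t) * a + Real.toNNReal t * b : ℝ≥0) : ℝ≥0∞) := by
          exact_mod_cast ENNReal.coe_le_coe.mpr (by
            simpa [Real.coe_toNNReal _ h1t.le, Real.coe_toNNReal _ ht0.le] using key)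
      _ = ENNReal.ofReal (1 - t) * a + ENNReal.ofReal t * b := by
          push_cast
          rw [ENNReal.ofReal_eq_coe_nnreal h1t.le, ENNReal.ofReal_eq_coe_nnreal ht0.le]
          congr 3 <;> exact Subtype.ext (max_eq_left (by linarith))

/-- Superlevel-set inequality via 1D Brunn-Minkowski and inner regularity. -/
lemma superlevel_add {A B H : Set ℝ} (hAm : MeasurableSet A) (hBm : MeasurableSet B)
    (hAne : A.Nonempty) (hBne : B.Nonempty)
    {t : ℝ} (ht0 : 0 < t) (ht1 : t < 1)
    (hsub : ∀ x ∈ A, ∀ y ∈ B, (1 - t) * x + t * y ∈ H) :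
    ENNReal.ofReal (1 - t) * volume A + ENNReal.ofReal t * volume B ≤ volume H := by
  obtain ⟨a₀, ha₀⟩ := hAne
  obtain ⟨b₀, hb₀⟩ := hBne
  have hA' : ENNReal.ofReal (1-t) * volume A
      = ⨆ (K : Set ℝ) (_ : K ⊆ A ∧ IsCompact K), ENNReal.ofReal (1-t) * volume K := by
    rw [hAm.measure_eq_iSup_isCompact, ENNReal.mul_iSup]
    congr 1; ext K
    rw [iSup_and, ENNReal.mul_iSup]
    congr 1; ext _
    rw [ENNReal.mul_iSup]
  have hB' : ENNReal.ofReal t * volume B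
      = ⨆ (K : Set ℝ) (_ : K ⊆ B ∧ IsCompact K), ENNReal.ofReal t * volume K := by
    rw [hBm.measure_eq_iSup_isCompact, ENNReal.mul_iSup]
    congr 1; ext K
    rw [iSup_and, ENNReal.mul_iSup]
    congr 1; ext _
    rw [ENNReal.mul_iSup]
  rw [hA', hB']
  refine ENNReal.biSup_add_biSup_le' (p := fun K => K ⊆ A ∧ IsCompact K)
    (q := fun K => K ⊆ B ∧ IsCompact K) ⟨∅, Set.empty_subset _, isCompact_empty⟩
    ⟨∅, Set.empty_subset _, isCompact_empty⟩ ?_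
  rintro K ⟨hKA, hKc⟩ K' ⟨hK'B, hK'c⟩
  -- augment to nonempty compacts
  set K₁ : Set ℝ := insert a₀ K with hK₁
  set K₂ : Set ℝ := insert b₀ K' with hK₂
  have hK₁c : IsCompact K₁ := hKc.insert a₀
  have hK₂c : IsCompact K₂ := hK'c.insert b₀
  have hK₁A : K₁ ⊆ A := Set.insert_subset ha₀ hKA
  have hK₂B : K₂ ⊆ B := Set.insert_subset hb₀ hK'B
  have hsmul1 : volume ((1-t) • K₁) = ENNReal.ofReal (1-t) * volume K₁ := by
    rw [Measure.addHaar_smul]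
    congr 2
    simp [abs_of_pos (by linarith : (0:ℝ) < 1 - t)]
  have hsmul2 : volume (t • K₂) = ENNReal.ofReal t * volume K₂ := by
    rw [Measure.addHaar_smul]
    congr 2
    simp [abs_of_pos ht0]
  have hsum : ((1-t) • K₁) + (t • K₂) ⊆ H := by
    rintro z ⟨x, hx, y, hy, rfl⟩
    obtain ⟨x', hx', rfl⟩ := hx
    obtain ⟨y', hy', rfl⟩ := hy
    exact hsub x' (hK₁A hx') y' (hK₂B hy')
  calc ENNReal.ofReal (1-t) * volume K + ENNReal.ofReal t * volume K'
      ≤ ENNReal.ofReal (1-t) * volume K₁ + ENNReal.ofReal t * volume K₂ := by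
        exact add_le_add (mul_le_mul_right (measure_mono (Set.subset_insert _ _)) _)
          (mul_le_mul_right (measure_mono (Set.subset_insert _ _)) _)
    _ = volume ((1-t) • K₁) + volume (t • K₂) := by rw [hsmul1, hsmul2]
    _ ≤ volume (((1-t) • K₁) + (t • K₂)) := by
        exact bm_one_dim _ _ (hK₁c.smul _) (hK₂c.smul _)
          ((Set.insert_nonempty _ _).smul_set) ((Set.insert_nonempty _ _).smul_set)
    _ ≤ volume H := measure_mono hsum

lemma rpow_ne_zero' {a : ℝ≥0∞} (ha : a ≠ 0) (ha' : a ≠ ∞) (c : ℝ) : a ^ c ≠ 0 := by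
  simp [ENNReal.rpow_eq_zero_iff, ha, ha']

lemma rpow_ne_top' {a : ℝ≥0∞} (ha : a ≠ 0) (ha' : a ≠ ∞) (c : ℝ) : a ^ c ≠ ∞ := by
  simp [ENNReal.rpow_eq_top_iff, ha, ha']

/-- Core 1D Prékopa-Leindler, assuming essential sups are finite and nonzero. -/
lemma pl_dim_one_core (f g h : ℝ → ℝ≥0∞) (hf : Measurable f) (hg : Measurable g)
    (hh : Measurable h) {t : ℝ} (ht0 : 0 < t) (ht1 : t < 1)
    (hyp : ∀ x y : ℝ, f x ^ (1 - t) * g y ^ t ≤ h ((1 - t) * x + t * y))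
    (hf0 : essSup f volume ≠ 0) (hfi : essSup f volume ≠ ∞)
    (hg0 : essSup g volume ≠ 0) (hgi : essSup g volume ≠ ∞) :
    (∫⁻ x, f x) ^ (1 - t) * (∫⁻ x, g x) ^ t ≤ ∫⁻ x, h x := by
  have h1t : 0 < 1 - t := by linarith
  set mf := essSup f volume with hmf
  set mg := essSup g volume with hmg
  set m : ℝ≥0∞ := mf ^ (1 - t) * mg ^ t with hm
  have hm0 : m ≠ 0 := by
    exact mul_ne_zero (rpow_ne_zero' hf0 hfi _) (rpow_ne_zero' hg0 hgi _)
  have hmi : m ≠ ∞ := by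
    exact ENNReal.mul_ne_top (rpow_ne_top' hf0 hfi _) (rpow_ne_top' hg0 hgi _)
  set f' : ℝ → ℝ≥0∞ := fun x => f x / mf with hf'
  set g' : ℝ → ℝ≥0∞ := fun x => g x / mg with hg'
  set h' : ℝ → ℝ≥0∞ := fun x => h x / m with hh'
  have hf'm : Measurable f' := hf.div_const mf
  have hg'm : Measurable g' := hg.div_const mg
  have hh'm : Measurable h' := hh.div_const m
  -- superlevel set identities
  have setf : ∀ s : ℝ≥0∞, {x | s < f' x} = {x | s * mf < f x} := by
    intro s; ext x
    exact ENNReal.lt_div_iff_mul_lt (Or.inl hf0) (Or.inl hfi)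
  have setg : ∀ s : ℝ≥0∞, {x | s < g' x} = {x | s * mg < g x} := by
    intro s; ext x
    exact ENNReal.lt_div_iff_mul_lt (Or.inl hg0) (Or.inl hgi)
  -- normalized hypothesis
  have hyp' : ∀ x y : ℝ, f' x ^ (1 - t) * g' y ^ t ≤ h' ((1 - t) * x + t * y) := by
    intro x y
    have e1 : f' x ^ (1 - t) * g' y ^ t = (f x ^ (1 - t) * g y ^ t) / m := by
      rw [hf', hg', ENNReal.div_rpow_of_nonneg _ _ h1t.le,
        ENNReal.div_rpow_of_nonneg _ _ ht0.le]
      rw [div_eq_mul_inv, div_eq_mul_inv, div_eq_mul_inv, hm,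
        ENNReal.mul_inv (Or.inl (rpow_ne_zero' hf0 hfi _)) (Or.inl (rpow_ne_top' hf0 hfi _))]
      ring
    rw [e1]
    exact ENNReal.div_le_div_right (hyp x y) m
  -- measurability and antitonicity of level-measure functions
  have antif : Antitone (fun s : ℝ => volume {x | ENNReal.ofReal s < f' x}) := by
    intro s1 s2 h12
    exact measure_mono (fun x hx => lt_of_le_of_lt (ENNReal.ofReal_le_ofReal h12) hx)
  have antig : Antitone (fun s : ℝ => volume {x | ENNReal.ofReal s < g' x}) := by
    intro s1 s2 h12
    exact measure_mono (fun x hx => lt_of_le_of_lt (ENNReal.ofReal_le_ofReal h12) hx)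
  -- layer cake restricted to (0,1)
  have cut : ∀ (φ : ℝ → ℝ≥0∞), Measurable φ →
      (∀ s : ℝ, 1 ≤ s → volume {x | ENNReal.ofReal s < φ x} = 0) →
      ∫⁻ x, φ x = ∫⁻ s in Set.Ioo (0:ℝ) 1, volume {x | ENNReal.ofReal s < φ x} := by
    intro φ hφ hzero
    rw [layercake_ennreal volume φ hφ]
    have hsplit : Set.Ioi (0:ℝ) = Set.Ioo (0:ℝ) 1 ∪ Set.Ici (1:ℝ) := by
      ext s; simp only [Set.mem_Ioi, Set.mem_union, Set.mem_Ioo, Set.mem_Ici]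
      constructor
      · intro hs; rcases lt_or_ge s 1 with h1 | h1
        · exact Or.inl ⟨hs, h1⟩
        · exact Or.inr h1
      · rintro (⟨hs, _⟩ | hs); exacts [hs, by linarith]
    rw [hsplit, lintegral_union measurableSet_Ici (by
      rw [Set.disjoint_left]; rintro s ⟨_, hs1⟩ hs2
      exact absurd hs2 (not_le.mpr (by simpa using hs1)))]
    have : ∫⁻ s in Set.Ici (1:ℝ), volume {x | ENNReal.ofReal s < φ x} = 0 := by
      rw [setLIntegral_congr_fun measurableSet_Ici
        (fun s hs => hzero s hs)]
      simp
    rw [this, add_zero]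
  have zf : ∀ s : ℝ, 1 ≤ s → volume {x | ENNReal.ofReal s < f' x} = 0 := by
    intro s hs
    rw [setf]
    refine measure_mono_null (fun x hx => ?_) (meas_essSup_lt (f := f) (μ := volume))
    have : mf ≤ ENNReal.ofReal s * mf := by
      nth_rewrite 1 [← one_mul mf]
      exact mul_le_mul_left (ENNReal.one_le_ofReal.mpr hs) mf
    exact lt_of_le_of_lt this hx
  have zg : ∀ s : ℝ, 1 ≤ s → volume {x | ENNReal.ofReal s < g' x} = 0 := by
    intro s hs
    rw [setg]
    refine measure_mono_null (fun x hx => ?_) (meas_essSup_lt (f := g) (μ := volume))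
    have : mg ≤ ENNReal.ofReal s * mg := by
      nth_rewrite 1 [← one_mul mg]
      exact mul_le_mul_left (ENNReal.one_le_ofReal.mpr hs) mg
    exact lt_of_le_of_lt this hx
  -- the key superlevel inequality on (0,1)
  have key : ∀ s : ℝ, s ∈ Set.Ioo (0:ℝ) 1 →
      ENNReal.ofReal (1 - t) * volume {x | ENNReal.ofReal s < f' x}
        + ENNReal.ofReal t * volume {x | ENNReal.ofReal s < g' x}
      ≤ volume {x | ENNReal.ofReal s < h' x} := by
    rintro s ⟨hs0, hs1⟩
    have hsne : ENNReal.ofReal s ≠ 0 := by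
      simp [ENNReal.ofReal_eq_zero]; linarith
    have hAm : MeasurableSet {x | ENNReal.ofReal s < f' x} :=
      measurableSet_lt measurable_const hf'm
    have hBm : MeasurableSet {x | ENNReal.ofReal s < g' x} :=
      measurableSet_lt measurable_const hg'm
    have hApos : volume {x | ENNReal.ofReal s < f' x} ≠ 0 := by
      rw [setf]
      intro hnull
      have hlt : ENNReal.ofReal s * mf < mf := by
        nth_rewrite 2 [← one_mul mf]
        exact (ENNReal.mul_lt_mul_iff_left hf0 hfi).mpr (ENNReal.ofReal_lt_one.mpr hs1)
      have : mf ≤ ENNReal.ofReal s * mf := by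
        have h2 : essSup f volume ≤ ENNReal.ofReal s * mf := by
          rw [essSup_eq_sInf]; exact sInf_le hnull
        exact h2
      exact absurd hlt (not_lt.mpr this)
    have hBpos : volume {x | ENNReal.ofReal s < g' x} ≠ 0 := by
      rw [setg]
      intro hnull
      have hlt : ENNReal.ofReal s * mg < mg := by
        nth_rewrite 2 [← one_mul mg]
        exact (ENNReal.mul_lt_mul_iff_left hg0 hgi).mpr (ENNReal.ofReal_lt_one.mpr hs1)
      have : mg ≤ ENNReal.ofReal s * mg := by
        have h2 : essSup g volume ≤ ENNReal.ofReal s * mg := by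
          rw [essSup_eq_sInf]; exact sInf_le hnull
        exact h2
      exact absurd hlt (not_lt.mpr this)
    refine superlevel_add hAm hBm (nonempty_of_measure_ne_zero hApos)
      (nonempty_of_measure_ne_zero hBpos) ht0 ht1 ?_
    intro x hx y hy
    have hfx : ENNReal.ofReal s < f' x := hx
    have hgy : ENNReal.ofReal s < g' y := hy
    have : ENNReal.ofReal s < f' x ^ (1 - t) * g' y ^ t := by
      have e : ENNReal.ofReal s = ENNReal.ofReal s ^ (1 - t) * ENNReal.ofReal s ^ t := by
        rw [← ENNReal.rpow_add _ _ hsne ENNReal.ofReal_ne_top]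
        norm_num
      rw [e]
      exact ENNReal.mul_lt_mul (ENNReal.rpow_lt_rpow hfx h1t) (ENNReal.rpow_lt_rpow hgy ht0)
    exact lt_of_lt_of_le this (hyp' x y)
  -- put it together for normalized functions
  have main' : (∫⁻ x, f' x) ^ (1 - t) * (∫⁻ x, g' x) ^ t ≤ ∫⁻ x, h' x := by
    have step1 : ∫⁻ x, h' x ≥ ∫⁻ s in Set.Ioo (0:ℝ) 1, volume {x | ENNReal.ofReal s < h' x} := by
      rw [layercake_ennreal volume h' hh'm]
      exact lintegral_mono_set (fun s hs => hs.1)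
    have step2 : ∫⁻ s in Set.Ioo (0:ℝ) 1, volume {x | ENNReal.ofReal s < h' x}
        ≥ ∫⁻ s in Set.Ioo (0:ℝ) 1,
            (ENNReal.ofReal (1 - t) * volume {x | ENNReal.ofReal s < f' x}
              + ENNReal.ofReal t * volume {x | ENNReal.ofReal s < g' x}) := by
      refine setLIntegral_mono (by
        refine Antitone.measurable (fun s1 s2 h12 => ?_)
        exact measure_mono (fun x hx => lt_of_le_of_lt (ENNReal.ofReal_le_ofReal h12) hx))
        (fun s hs => key s hs)
    have step3 : ∫⁻ s in Set.Ioo (0:ℝ) 1,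
        (ENNReal.ofReal (1 - t) * volume {x | ENNReal.ofReal s < f' x}
          + ENNReal.ofReal t * volume {x | ENNReal.ofReal s < g' x})
        = ENNReal.ofReal (1 - t) * (∫⁻ x, f' x) + ENNReal.ofReal t * (∫⁻ x, g' x) := by
      rw [lintegral_add_left ((antif.measurable).const_mul _)]
      rw [lintegral_const_mul' _ _ ENNReal.ofReal_ne_top,
        lintegral_const_mul' _ _ ENNReal.ofReal_ne_top]
      rw [← cut f' hf'm zf, ← cut g' hg'm zg]
    calc (∫⁻ x, f' x) ^ (1 - t) * (∫⁻ x, g' x) ^ t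
        ≤ ENNReal.ofReal (1 - t) * (∫⁻ x, f' x) + ENNReal.ofReal t * (∫⁻ x, g' x) :=
          ennreal_geom_mean_le _ _ ht0 ht1
      _ = ∫⁻ s in Set.Ioo (0:ℝ) 1,
            (ENNReal.ofReal (1 - t) * volume {x | ENNReal.ofReal s < f' x}
              + ENNReal.ofReal t * volume {x | ENNReal.ofReal s < g' x}) := step3.symm
      _ ≤ ∫⁻ s in Set.Ioo (0:ℝ) 1, volume {x | ENNReal.ofReal s < h' x} := step2
      _ ≤ ∫⁻ x, h' x := step1
  -- unnormalize
  have if' : ∫⁻ x, f' x = (∫⁻ x, f x) * mf⁻¹ := by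
    simp only [hf', div_eq_mul_inv]
    exact lintegral_mul_const' _ _ (ENNReal.inv_ne_top.mpr hf0)
  have ig' : ∫⁻ x, g' x = (∫⁻ x, g x) * mg⁻¹ := by
    simp only [hg', div_eq_mul_inv]
    exact lintegral_mul_const' _ _ (ENNReal.inv_ne_top.mpr hg0)
  have ih' : ∫⁻ x, h' x = (∫⁻ x, h x) * m⁻¹ := by
    simp only [hh', div_eq_mul_inv]
    exact lintegral_mul_const' _ _ (ENNReal.inv_ne_top.mpr hm0)
  rw [if', ig', ih'] at main'
  have expand : ((∫⁻ x, f x) * mf⁻¹) ^ (1 - t) * ((∫⁻ x, g x) * mg⁻¹) ^ t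
      = ((∫⁻ x, f x) ^ (1 - t) * (∫⁻ x, g x) ^ t) * m⁻¹ := by
    rw [ENNReal.mul_rpow_of_nonneg _ _ h1t.le, ENNReal.mul_rpow_of_nonneg _ _ ht0.le,
      ENNReal.inv_rpow, ENNReal.inv_rpow, hm,
      ENNReal.mul_inv (Or.inl (rpow_ne_zero' hf0 hfi _)) (Or.inl (rpow_ne_top' hf0 hfi _))]
    ring
  rw [expand] at main'
  exact (ENNReal.mul_le_mul_iff_left (ENNReal.inv_ne_zero.mpr hmi)
    (ENNReal.inv_ne_top.mpr hm0)).mp main'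

/-- If the essential supremum vanishes, the lintegral vanishes. -/
lemma lintegral_eq_zero_of_essSup_eq_zero {f : ℝ → ℝ≥0∞} (hf : essSup f volume = 0) :
    ∫⁻ x, f x = 0 := by
  have h1 : f =ᵐ[volume] 0 := by
    have := meas_essSup_lt (f := f) (μ := volume)
    rw [hf] at this
    refine measure_mono_null ?_ this
    intro x hx
    simpa [pos_iff_ne_zero] using hx
  rw [lintegral_congr_ae h1]; simp

/-- Full 1D Prékopa-Leindler inequality (lintegral form). -/
lemma pl_dim_one (f g h : ℝ → ℝ≥0∞) (hf : Measurable f) (hg : Measurable g)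
    (hh : Measurable h) {t : ℝ} (ht0 : 0 < t) (ht1 : t < 1)
    (hyp : ∀ x y : ℝ, f x ^ (1 - t) * g y ^ t ≤ h ((1 - t) * x + t * y)) :
    (∫⁻ x, f x) ^ (1 - t) * (∫⁻ x, g x) ^ t ≤ ∫⁻ x, h x := by
  have h1t : 0 < 1 - t := by linarith
  by_cases hF : ∫⁻ x, f x = 0
  · rw [hF, ENNReal.zero_rpow_of_pos h1t, zero_mul]; positivity
  by_cases hG : ∫⁻ x, g x = 0
  · rw [hG, ENNReal.zero_rpow_of_pos ht0, mul_zero]; positivity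
  -- truncations
  set fn : ℕ → ℝ → ℝ≥0∞ := fun n x => min (f x) n with hfn
  set gn : ℕ → ℝ → ℝ≥0∞ := fun n x => min (g x) n with hgn
  have hfnm : ∀ n, Measurable (fn n) := fun n => hf.min measurable_const
  have hgnm : ∀ n, Measurable (gn n) := fun n => hg.min measurable_const
  have hmono : ∀ (φ : ℝ → ℝ≥0∞), Monotone (fun (n : ℕ) (x : ℝ) => min (φ x) n) := by
    intro φ n1 n2 h12 x
    exact min_le_min le_rfl (by exact_mod_cast Nat.cast_le.mpr h12)
  have hsup : ∀ (φ : ℝ → ℝ≥0∞) (x : ℝ), (⨆ n : ℕ, min (φ x) n) = φ x := by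
    intro φ x
    apply le_antisymm
    · exact iSup_le fun n => min_le_left _ _
    · by_cases hx : φ x = ∞
      · calc φ x = ⨆ n : ℕ, (n : ℝ≥0∞) := by rw [ENNReal.iSup_natCast, hx]
          _ ≤ ⨆ n : ℕ, min (φ x) n := by
              exact iSup_mono fun n => le_min (by rw [hx]; exact le_top) le_rfl
      · obtain ⟨n, hn⟩ := ENNReal.exists_nat_gt hx
        calc φ x = min (φ x) n := (min_eq_left hn.le).symm
          _ ≤ ⨆ n : ℕ, min (φ x) n := le_iSup (fun n : ℕ => min (φ x) n) n
  have hflim : (⨆ n, ∫⁻ x, fn n x) = ∫⁻ x, f x := by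
    rw [← lintegral_iSup hfnm (fun n1 n2 h12 x => hmono f h12 x)]
    exact lintegral_congr fun x => hsup f x
  have hglim : (⨆ n, ∫⁻ x, gn n x) = ∫⁻ x, g x := by
    rw [← lintegral_iSup hgnm (fun n1 n2 h12 x => hmono g h12 x)]
    exact lintegral_congr fun x => hsup g x
  -- each truncated level satisfies the bound
  have hbound : ∀ n : ℕ, (∫⁻ x, fn n x) ^ (1 - t) * (∫⁻ x, gn n x) ^ t ≤ ∫⁻ x, h x := by
    intro n
    by_cases hef : essSup (fn n) volume = 0
    · rw [lintegral_eq_zero_of_essSup_eq_zero hef, ENNReal.zero_rpow_of_pos h1t, zero_mul]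
      positivity
    by_cases heg : essSup (gn n) volume = 0
    · rw [lintegral_eq_zero_of_essSup_eq_zero heg, ENNReal.zero_rpow_of_pos ht0, mul_zero]
      positivity
    refine pl_dim_one_core (fn n) (gn n) h (hfnm n) (hgnm n) hh ht0 ht1 ?_ hef ?_ heg ?_
    · intro x y
      refine le_trans ?_ (hyp x y)
      exact mul_le_mul' (ENNReal.rpow_le_rpow (min_le_left _ _) h1t.le)
        (ENNReal.rpow_le_rpow (min_le_left _ _) ht0.le)
    · exact ne_top_of_le_ne_top (ENNReal.natCast_ne_top n)
        (essSup_le_of_ae_le _ (Filter.Eventually.of_forall fun x => min_le_right _ _))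
    · exact ne_top_of_le_ne_top (ENNReal.natCast_ne_top n)
        (essSup_le_of_ae_le _ (Filter.Eventually.of_forall fun x => min_le_right _ _))
  -- pass to the limit
  have htendf : Tendsto (fun n => ∫⁻ x, fn n x) atTop (𝓝 (∫⁻ x, f x)) := by
    rw [← hflim]
    exact tendsto_atTop_iSup (fun n1 n2 h12 => lintegral_mono (hmono f h12))
  have htendg : Tendsto (fun n => ∫⁻ x, gn n x) atTop (𝓝 (∫⁻ x, g x)) := by
    rw [← hglim]
    exact tendsto_atTop_iSup (fun n1 n2 h12 => lintegral_mono (hmono g h12))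
  have hne1 : (∫⁻ x, f x) ^ (1 - t) ≠ 0 := by
    simp only [Ne, ENNReal.rpow_eq_zero_iff, not_or]
    constructor
    · rintro ⟨h0, _⟩; exact hF h0
    · rintro ⟨_, hlt⟩; linarith
  have hne2 : (∫⁻ x, g x) ^ t ≠ 0 := by
    simp only [Ne, ENNReal.rpow_eq_zero_iff, not_or]
    constructor
    · rintro ⟨h0, _⟩; exact hG h0
    · rintro ⟨_, hlt⟩; linarith
  have htend : Tendsto (fun n => (∫⁻ x, fn n x) ^ (1 - t) * (∫⁻ x, gn n x) ^ t) atTop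
      (𝓝 ((∫⁻ x, f x) ^ (1 - t) * (∫⁻ x, g x) ^ t)) := by
    refine ENNReal.Tendsto.mul ?_ (Or.inl hne1) ?_ (Or.inl hne2)
    · exact (ENNReal.continuous_rpow_const.tendsto _).comp htendf
    · exact (ENNReal.continuous_rpow_const.tendsto _).comp htendg
  exact le_of_tendsto htend (Filter.Eventually.of_forall hbound)

/-- Prékopa-Leindler in `Fin n → ℝ` (lintegral form). -/
lemma pl_pi : ∀ (n : ℕ) (f g h : (Fin n → ℝ) → ℝ≥0∞), Measurable f → Measurable g →
    Measurable h → ∀ {t : ℝ}, 0 < t → t < 1 →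
    (∀ x y, f x ^ (1 - t) * g y ^ t ≤ h ((1 - t) • x + t • y)) →
    (∫⁻ x, f x) ^ (1 - t) * (∫⁻ x, g x) ^ t ≤ ∫⁻ x, h x := by
  intro n
  induction n with
  | zero =>
    intro f g h hf hg hh t ht0 ht1 hyp
    have hconst : ∀ (φ : (Fin 0 → ℝ) → ℝ≥0∞), ∫⁻ x, φ x = φ 0 := by
      intro φ
      have : φ = fun _ => φ 0 := by
        funext x; congr 1; exact Subsingleton.elim _ _
      rw [this, lintegral_const]
      have : (volume : Measure (Fin 0 → ℝ)) Set.univ = 1 := by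
        rw [MeasureTheory.volume_pi, Measure.pi_univ]; simp
      rw [this, mul_one]
    rw [hconst f, hconst g, hconst h]
    have := hyp 0 0
    simpa [Subsingleton.elim ((1 - t) • (0 : Fin 0 → ℝ) + t • 0) (0 : Fin 0 → ℝ)] using this
  | succ n ih =>
    intro f g h hf hg hh t ht0 ht1 hyp
    set e := MeasurableEquiv.piFinSuccAbove (fun _ : Fin (n+1) => ℝ) 0 with he
    have hmp : MeasurePreserving e.symm volume volume :=
      (volume_preserving_piFinSuccAbove (fun _ : Fin (n+1) => ℝ) 0).symm
    set F : ℝ × (Fin n → ℝ) → ℝ≥0∞ := fun p => f (e.symm p) with hF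
    set G : ℝ × (Fin n → ℝ) → ℝ≥0∞ := fun p => g (e.symm p) with hG
    set H : ℝ × (Fin n → ℝ) → ℝ≥0∞ := fun p => h (e.symm p) with hH
    have hFm : Measurable F := hf.comp e.symm.measurable
    have hGm : Measurable G := hg.comp e.symm.measurable
    have hHm : Measurable H := hh.comp e.symm.measurable
    have hFi : ∫⁻ p, F p = ∫⁻ x, f x := hmp.lintegral_comp hf
    have hGi : ∫⁻ p, G p = ∫⁻ x, g x := hmp.lintegral_comp hg
    have hHi : ∫⁻ p, H p = ∫⁻ x, h x := hmp.lintegral_comp hh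
    -- linearity of e.symm
    have hlin : ∀ (c₁ c₂ : ℝ) (v₁ v₂ : Fin n → ℝ),
        e.symm ((1 - t) * c₁ + t * c₂, (1 - t) • v₁ + t • v₂)
          = (1 - t) • e.symm (c₁, v₁) + t • e.symm (c₂, v₂) := by
      intro c₁ c₂ v₁ v₂
      show (Fin.insertNth (0 : Fin (n+1)) ((1-t)*c₁ + t*c₂) ((1-t) • v₁ + t • v₂) : Fin (n+1) → ℝ)
          = (1-t) • (Fin.insertNth (0 : Fin (n+1)) c₁ v₁ : Fin (n+1) → ℝ)
            + t • (Fin.insertNth (0 : Fin (n+1)) c₂ v₂ : Fin (n+1) → ℝ)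
      funext i
      refine Fin.cases ?_ (fun j => ?_) i <;>
        simp [Fin.insertNth_apply_same, Fin.insertNth_apply_succAbove]
    -- marginals
    set Ff : ℝ → ℝ≥0∞ := fun x => ∫⁻ v, F (x, v) with hFf
    set Gg : ℝ → ℝ≥0∞ := fun x => ∫⁻ v, G (x, v) with hGg
    set Hh : ℝ → ℝ≥0∞ := fun x => ∫⁻ v, H (x, v) with hHh
    have hFfm : Measurable Ff := hFm.lintegral_prod_right'
    have hGgm : Measurable Gg := hGm.lintegral_prod_right'
    have hHhm : Measurable Hh := hHm.lintegral_prod_right'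
    have hmarg : ∀ x y : ℝ, Ff x ^ (1 - t) * Gg y ^ t ≤ Hh ((1 - t) * x + t * y) := by
      intro x y
      refine ih (fun v => F (x, v)) (fun w => G (y, w)) (fun w => H ((1-t)*x + t*y, w))
        (hFm.comp (measurable_prodMk_left)) (hGm.comp (measurable_prodMk_left))
        (hHm.comp (measurable_prodMk_left)) ht0 ht1 ?_
      intro v w
      have := hyp (e.symm (x, v)) (e.symm (y, w))
      rwa [← hlin x y v w] at this
    have h1d := pl_dim_one Ff Gg Hh hFfm hGgm hHhm ht0 ht1 hmarg
    have eq1 : ∫⁻ x, Ff x = ∫⁻ p, F p := by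
      rw [Measure.volume_eq_prod, lintegral_prod _ hFm.aemeasurable]
    have eq2 : ∫⁻ x, Gg x = ∫⁻ p, G p := by
      rw [Measure.volume_eq_prod, lintegral_prod _ hGm.aemeasurable]
    have eq3 : ∫⁻ x, Hh x = ∫⁻ p, H p := by
      rw [Measure.volume_eq_prod, lintegral_prod _ hHm.aemeasurable]
    rw [eq1, eq2, eq3, hFi, hGi, hHi] at h1d
    exact h1d

/-- Prékopa-Leindler in Euclidean space (lintegral form). -/
lemma pl_euclidean (n : ℕ) (f g h : EuclideanSpace ℝ (Fin n) → ℝ≥0∞) (hf : Measurable f)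
    (hg : Measurable g) (hh : Measurable h) {t : ℝ} (ht0 : 0 < t) (ht1 : t < 1)
    (hyp : ∀ x y, f x ^ (1 - t) * g y ^ t ≤ h ((1 - t) • x + t • y)) :
    (∫⁻ x, f x) ^ (1 - t) * (∫⁻ x, g x) ^ t ≤ ∫⁻ x, h x := by
  set e := (MeasurableEquiv.toLp 2 (Fin n → ℝ)).symm with he
  have hmp : MeasurePreserving e.symm volume volume :=
    (EuclideanSpace.volume_preserving_symm_measurableEquiv_toLp (Fin n)).symm
  have hlin : ∀ (x y : Fin n → ℝ),
      e.symm ((1 - t) • x + t • y) = (1 - t) • e.symm x + t • e.symm y := by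
    intro x y; rfl
  have key := pl_pi n (fun p => f (e.symm p)) (fun p => g (e.symm p)) (fun p => h (e.symm p))
    (hf.comp e.symm.measurable) (hg.comp e.symm.measurable) (hh.comp e.symm.measurable)
    ht0 ht1 (by
      intro x y
      have := hyp (e.symm x) (e.symm y)
      rwa [← hlin x y] at this)
  rwa [hmp.lintegral_comp hf, hmp.lintegral_comp hg, hmp.lintegral_comp hh] at key

/-- Power mean inequality: the p-mean is at most the arithmetic mean, for `p ≤ 1`. -/
lemma pmean_le_arith {a b t p : ℝ} (ha : 0 ≤ a) (hb : 0 ≤ b) (ht0 : 0 ≤ t) (ht1 : t ≤ 1)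
    (hp0 : 0 < p) (hp1 : p ≤ 1) :
    ((1 - t) * a ^ p + t * b ^ p) ^ (1 / p) ≤ (1 - t) * a + t * b := by
  have h1t : 0 ≤ 1 - t := by linarith
  have hq : 1 ≤ 1 / p := by rw [le_div_iff₀ hp0]; linarith
  have key := NNReal.rpow_arith_mean_le_arith_mean2_rpow (Real.toNNReal (1 - t))
    (Real.toNNReal t) (Real.toNNReal a ^ p) (Real.toNNReal b ^ p)
    (by rw [← Real.toNNReal_add h1t ht0]; norm_num) hq
  have coekey := NNReal.coe_le_coe.mpr key
  push_cast [NNReal.coe_rpow, Real.coe_toNNReal _ h1t, Real.coe_toNNReal _ ht0,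
    Real.coe_toNNReal _ ha, Real.coe_toNNReal _ hb] at coekey
  calc ((1 - t) * a ^ p + t * b ^ p) ^ (1 / p)
      ≤ (1 - t) * (a ^ p) ^ (1/p) + t * (b ^ p) ^ (1/p) := coekey
    _ = (1 - t) * a + t * b := by
        rw [← Real.rpow_mul ha, ← Real.rpow_mul hb, mul_one_div_cancel hp0.ne',
          Real.rpow_one, Real.rpow_one]

/-- Convexity of the squared norm. -/
lemma norm_sq_combo {n : ℕ} (x y : EuclideanSpace ℝ (Fin n)) {t : ℝ} (ht0 : 0 ≤ t) (ht1 : t ≤ 1) :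
    ‖(1 - t) • x + t • y‖ ^ 2 ≤ (1 - t) * ‖x‖ ^ 2 + t * ‖y‖ ^ 2 := by
  have h1t : 0 ≤ 1 - t := by linarith
  have htr : ‖(1 - t) • x + t • y‖ ≤ (1 - t) * ‖x‖ + t * ‖y‖ := by
    calc ‖(1 - t) • x + t • y‖ ≤ ‖(1 - t) • x‖ + ‖t • y‖ := norm_add_le _ _
      _ = (1 - t) * ‖x‖ + t * ‖y‖ := by
          rw [norm_smul, norm_smul, Real.norm_of_nonneg h1t, Real.norm_of_nonneg ht0]
  have h1 : ‖(1 - t) • x + t • y‖ ^ 2 ≤ ((1 - t) * ‖x‖ + t * ‖y‖) ^ 2 := by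
    apply sq_le_sq' _ htr
    have : 0 ≤ (1 - t) * ‖x‖ + t * ‖y‖ := by positivity
    linarith [norm_nonneg ((1 - t) • x + t • y)]
  refine h1.trans ?_
  nlinarith [sq_nonneg (‖x‖ - ‖y‖), mul_nonneg h1t ht0, sq_nonneg (‖x‖ + ‖y‖)]

/-- Log-concavity of the Gaussian density, in `ℝ≥0∞`. -/
lemma gauss_logconcave {n : ℕ} (x y : EuclideanSpace ℝ (Fin n)) {t : ℝ} (ht0 : 0 < t)
    (ht1 : t < 1) :
    ENNReal.ofReal (Real.exp (-‖x‖ ^ 2 / 2)) ^ (1 - t)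
      * ENNReal.ofReal (Real.exp (-‖y‖ ^ 2 / 2)) ^ t
    ≤ ENNReal.ofReal (Real.exp (-‖(1 - t) • x + t • y‖ ^ 2 / 2)) := by
  rw [ENNReal.ofReal_rpow_of_pos (Real.exp_pos _), ENNReal.ofReal_rpow_of_pos (Real.exp_pos _),
    ← Real.exp_mul, ← Real.exp_mul, ← ENNReal.ofReal_mul (Real.exp_nonneg _),
    ← Real.exp_add]
  apply ENNReal.ofReal_le_ofReal
  apply Real.exp_le_exp.mpr
  have := norm_sq_combo x y ht0.le ht1.le
  nlinarith

end PLAux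

/-- For `K, L ∈ 𝒦(C,ω)`, `p ∈ (0,1]` and `t ∈ [0,1]`, the Gaussian measure of the Wulff
shape of the `p`-mean `((1-t)ĥ_K^p + tĥ_L^p)^{1/p}` satisfies
`log γⁿ(·) ≥ (1-t) log γⁿ(K) + t log γⁿ(L)`. -/
theorem log_gaussian_wulff_p_mean_ge {n : ℕ} (hn : 1 ≤ n) (C : Set (En n))
    (hC : IsPointedCone C) (ω : Set (En n)) (hω : ω.Nonempty) (hωc : IsCompact ω)
    (hωΩ : ω ⊆ OmegaSet C) (K L : Set (En n)) (hK : InKClass C ω K) (hL : InKClass C ω L)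
    (p : ℝ) (hp0 : 0 < p) (hp1 : p ≤ 1) (t : ℝ) (ht0 : 0 ≤ t) (ht1 : t ≤ 1) :
    Real.log (gaussianMeasure n (C ∩ ⋂ u ∈ ω, {y : En n | ⟪y, u⟫ ≤
        -(((1 - t) * (-suppFn K u) ^ p + t * (-suppFn L u) ^ p) ^ (1 / p))})) ≥
      (1 - t) * Real.log (gaussianMeasure n K) + t * Real.log (gaussianMeasure n L) := by
  classical
  -- basic data
  obtain ⟨⟨⟨hKne, hKcl, hKcv, hK0, hKsc⟩, hKrec⟩, hKdet⟩ := hK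
  obtain ⟨⟨⟨hLne, hLcl, hLcv, hL0, hLsc⟩, hLrec⟩, hLdet⟩ := hL
  obtain ⟨hCcl, hCcv, hCcone, hCint, hCpt⟩ := hC
  set W : Set (En n) := C ∩ ⋂ u ∈ ω, {y : En n | ⟪y, u⟫ ≤
      -(((1 - t) * (-suppFn K u) ^ p + t * (-suppFn L u) ^ p) ^ (1 / p))} with hWdef
  -- the Gaussian density
  set φ : En n → ℝ≥0∞ := fun x => ENNReal.ofReal (Real.exp (-‖x‖ ^ 2 / 2)) with hφdef
  have hexpc : Continuous (fun x : En n => Real.exp (-‖x‖ ^ 2 / 2)) :=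
    Real.continuous_exp.comp (((continuous_norm.pow 2).neg).div_const 2)
  have hφm : Measurable φ := ENNReal.measurable_ofReal.comp hexpc.measurable
  have hint : Integrable (fun x : En n => Real.exp (-‖x‖ ^ 2 / 2)) := by
    have h := GaussianFourier.integrable_cexp_neg_mul_sq_norm_add_of_euclideanSpace
      (b := (1/2 : ℂ)) (by norm_num) 0 (0 : En n)
    refine h.norm.congr (Filter.Eventually.of_forall fun x => ?_)
    simp only [Complex.norm_exp]
    congr 1
    have : (-(1/2) * (‖x‖:ℂ)^2 + 0 * ((inner ℝ (0 : En n) x : ℝ):ℂ)) = ((-‖x‖^2/2 : ℝ) : ℂ) := by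
      push_cast; ring
    rw [this, Complex.ofReal_re]
  have htot : ∫⁻ x, φ x ≠ ∞ := by
    have h := hint.hasFiniteIntegral
    rw [hasFiniteIntegral_iff_ofReal
      (Filter.Eventually.of_forall fun x => (Real.exp_pos _).le)] at h
    exact h.ne
  have htop : ∀ A : Set (En n), ∫⁻ x in A, φ x ≠ ∞ := by
    intro A
    exact ne_top_of_le_ne_top htot (setLIntegral_le_lintegral _ _)
  -- Gaussian measure via lintegral
  have hγ : ∀ A : Set (En n), gaussianMeasure n A
      = (2 * Real.pi) ^ (-(n : ℝ) / 2) * (∫⁻ x in A, φ x).toReal := by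
    intro A
    unfold gaussianMeasure
    congr 1
    rw [integral_eq_lintegral_of_nonneg_ae
      (Filter.Eventually.of_forall fun x => (Real.exp_pos _).le)
      hexpc.aestronglyMeasurable]
  have hc_pos : (0:ℝ) < (2 * Real.pi) ^ (-(n : ℝ) / 2) :=
    Real.rpow_pos_of_pos (by positivity) _
  -- positivity of integrals over sets containing a translate of the interior of C
  obtain ⟨c0, hc0⟩ := hCint
  have hLposgen : ∀ (A : Set (En n)) (z : En n),
      ((fun y => y - z) ⁻¹' interior C) ⊆ A → 0 < ∫⁻ x in A, φ x := by
    intro A z hsub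
    set U : Set (En n) := (fun y => y - z) ⁻¹' interior C with hU
    have hUo : IsOpen U := isOpen_interior.preimage (continuous_id.sub continuous_const)
    have hUne : U.Nonempty := ⟨z + c0, show z + c0 - z ∈ interior C by simpa using hc0⟩
    have h1 : 0 < ∫⁻ x in U, φ x := by
      rcases eq_or_lt_of_le (show (0:ℝ≥0∞) ≤ ∫⁻ x in U, φ x by positivity) with h0 | h0
      · exfalso
        have h0' : ∫⁻ x in U, φ x = 0 := h0.symm
        rw [lintegral_eq_zero_iff hφm] at h0'
        have huniv : {x : En n | φ x ≠ 0} = Set.univ := by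
          ext x
          simp only [hφdef, Set.mem_setOf_eq, Set.mem_univ, iff_true, Ne,
            ENNReal.ofReal_eq_zero, not_le]
          exact Real.exp_pos _
        have hres : (volume.restrict U) {x | φ x ≠ 0} = 0 := by
          have h2 := h0'
          rw [Filter.EventuallyEq, ae_iff] at h2
          simpa [Pi.zero_apply] using h2
        rw [huniv, Measure.restrict_apply_univ] at hres
        exact (hUo.measure_pos volume hUne).ne' hres
      · exact h0
    exact lt_of_lt_of_le h1 (lintegral_mono_set hsub)
  -- interior translates inside K, L, W
  obtain ⟨x0, hx0⟩ := hKne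
  obtain ⟨y0, hy0⟩ := hLne
  have hKrec' : ∀ c ∈ C, ∀ x ∈ K, x + c ∈ K := by
    intro c hc x hx
    have : c ∈ recessionCone K := by rw [hKrec]; exact hc
    exact this x hx
  have hLrec' : ∀ c ∈ C, ∀ y ∈ L, y + c ∈ L := by
    intro c hc y hy
    have : c ∈ recessionCone L := by rw [hLrec]; exact hc
    exact this y hy
  have hKU : ((fun y => y - x0) ⁻¹' interior C) ⊆ K := by
    intro y hy
    have := hKrec' (y - x0) (interior_subset hy) x0 hx0
    simpa using this
  have hLU : ((fun y => y - y0) ⁻¹' interior C) ⊆ L := by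
    intro y hy
    have := hLrec' (y - y0) (interior_subset hy) y0 hy0
    simpa using this
  -- K, L ⊆ C and support function facts
  have hKsubC : K ⊆ C := by rw [hKdet]; exact Set.inter_subset_left
  have hLsubC : L ⊆ C := by rw [hLdet]; exact Set.inter_subset_left
  have hmemK : ∀ x ∈ K, ∀ u ∈ ω, ⟪x, u⟫ ≤ suppFn K u := by
    intro x hx u hu
    have hx' := hx
    rw [hKdet] at hx'
    exact Set.mem_iInter₂.mp hx'.2 u hu
  have hmemL : ∀ y ∈ L, ∀ u ∈ ω, ⟪y, u⟫ ≤ suppFn L u := by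
    intro y hy u hu
    have hy' := hy
    rw [hLdet] at hy'
    exact Set.mem_iInter₂.mp hy'.2 u hu
  have hsuppK : ∀ u ∈ ω, suppFn K u ≤ 0 := by
    intro u hu
    have hupolar : u ∈ polarCone C := interior_subset (hωΩ hu).2
    refine csSup_le (Set.Nonempty.image _ ⟨x0, hx0⟩) ?_
    rintro z ⟨x, hx, rfl⟩
    have := hupolar x (hKsubC hx)
    rwa [real_inner_comm] at this
  have hsuppL : ∀ u ∈ ω, suppFn L u ≤ 0 := by
    intro u hu
    have hupolar : u ∈ polarCone C := interior_subset (hωΩ hu).2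
    refine csSup_le (Set.Nonempty.image _ ⟨y0, hy0⟩) ?_
    rintro z ⟨y, hy, rfl⟩
    have := hupolar y (hLsubC hy)
    rwa [real_inner_comm] at this
  -- measurable sets
  have hKmeas : MeasurableSet K := hKcl.measurableSet
  have hLmeas : MeasurableSet L := hLcl.measurableSet
  have hWcl : IsClosed W := by
    refine hCcl.inter (isClosed_iInter fun u => isClosed_iInter fun _ => ?_)
    exact isClosed_le (continuous_id.inner continuous_const) continuous_const
  have hWmeas : MeasurableSet W := hWcl.measurableSet
  -- positivity of the Gaussian measures of K and L
  have hLK : 0 < ∫⁻ x in K, φ x := hLposgen K x0 hKU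
  have hLL : 0 < ∫⁻ x in L, φ x := hLposgen L y0 hLU
  have hγKpos : 0 < gaussianMeasure n K := by
    rw [hγ K]
    exact mul_pos hc_pos (ENNReal.toReal_pos hLK.ne' (htop K))
  have hγLpos : 0 < gaussianMeasure n L := by
    rw [hγ L]
    exact mul_pos hc_pos (ENNReal.toReal_pos hLL.ne' (htop L))
  -- monotonicity of Gaussian measure
  have hγmono : ∀ A B : Set (En n), A ⊆ B → gaussianMeasure n A ≤ gaussianMeasure n B := by
    intro A B hAB
    rw [hγ A, hγ B]
    refine mul_le_mul_of_nonneg_left ?_ hc_pos.le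
    exact ENNReal.toReal_mono (htop B) (lintegral_mono_set hAB)
  -- endpoint case t = 0
  rcases eq_or_lt_of_le ht0 with h0 | ht0'
  · have ht : t = 0 := h0.symm
    subst ht
    have hKW : K ⊆ W := by
      intro x hx
      refine ⟨hKsubC hx, Set.mem_iInter₂.mpr fun u hu => ?_⟩
      have ha : 0 ≤ -suppFn K u := neg_nonneg.mpr (hsuppK u hu)
      show ⟪x, u⟫ ≤ -(((1 - 0) * (-suppFn K u) ^ p + 0 * (-suppFn L u) ^ p) ^ (1 / p))
      have : ((1 - 0) * (-suppFn K u) ^ p + 0 * (-suppFn L u) ^ p) ^ (1 / p)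
          = -suppFn K u := by
        rw [sub_zero, one_mul, zero_mul, add_zero, ← Real.rpow_mul ha,
          mul_one_div_cancel hp0.ne', Real.rpow_one]
      rw [this, neg_neg]
      exact hmemK x hx u hu
    have := hγmono K W hKW
    have hlog := Real.log_le_log hγKpos this
    simpa using hlog
  -- endpoint case t = 1
  rcases eq_or_lt_of_le ht1 with h1 | ht1'
  · have ht : t = 1 := h1
    subst ht
    have hLW : L ⊆ W := by
      intro y hy
      refine ⟨hLsubC hy, Set.mem_iInter₂.mpr fun u hu => ?_⟩
      have hb : 0 ≤ -suppFn L u := neg_nonneg.mpr (hsuppL u hu)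
      show ⟪y, u⟫ ≤ -(((1 - 1) * (-suppFn K u) ^ p + 1 * (-suppFn L u) ^ p) ^ (1 / p))
      have : ((1 - 1) * (-suppFn K u) ^ p + 1 * (-suppFn L u) ^ p) ^ (1 / p)
          = -suppFn L u := by
        rw [sub_self, zero_mul, one_mul, zero_add, ← Real.rpow_mul hb,
          mul_one_div_cancel hp0.ne', Real.rpow_one]
      rw [this, neg_neg]
      exact hmemL y hy u hu
    have := hγmono L W hLW
    have hlog := Real.log_le_log hγLpos this
    simpa using hlog
  -- main case 0 < t < 1
  have h1t : 0 < 1 - t := by linarith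
  -- convex combinations of K and L lie in W
  have hcomb : ∀ x ∈ K, ∀ y ∈ L, (1 - t) • x + t • y ∈ W := by
    intro x hx y hy
    refine ⟨hCcv (hKsubC hx) (hLsubC hy) h1t.le ht0'.le (by ring), Set.mem_iInter₂.mpr
      fun u hu => ?_⟩
    show ⟪(1 - t) • x + t • y, u⟫ ≤
      -(((1 - t) * (-suppFn K u) ^ p + t * (-suppFn L u) ^ p) ^ (1 / p))
    have ha : 0 ≤ -suppFn K u := neg_nonneg.mpr (hsuppK u hu)
    have hb : 0 ≤ -suppFn L u := neg_nonneg.mpr (hsuppL u hu)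
    have hpm := pmean_le_arith ha hb ht0 ht1 hp0 hp1
    have h1 : ⟪x, u⟫ ≤ suppFn K u := hmemK x hx u hu
    have h2 : ⟪y, u⟫ ≤ suppFn L u := hmemL y hy u hu
    have hinner : ⟪(1 - t) • x + t • y, u⟫ = (1 - t) * ⟪x, u⟫ + t * ⟪y, u⟫ := by
      rw [inner_add_left, real_inner_smul_left, real_inner_smul_left]
    rw [hinner]
    have e1 : (1 - t) * ⟪x, u⟫ ≤ (1 - t) * suppFn K u :=
      mul_le_mul_of_nonneg_left h1 h1t.le
    have e2 : t * ⟪y, u⟫ ≤ t * suppFn L u := mul_le_mul_of_nonneg_left h2 ht0'.le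
    nlinarith [hpm]
  -- Prékopa-Leindler
  have hPL := pl_euclidean n (K.indicator φ) (L.indicator φ) (W.indicator φ)
    (hφm.indicator hKmeas) (hφm.indicator hLmeas) (hφm.indicator hWmeas) ht0' ht1' ?_
  swap
  · intro x y
    by_cases hx : x ∈ K
    · by_cases hy : y ∈ L
      · rw [Set.indicator_of_mem hx, Set.indicator_of_mem hy,
          Set.indicator_of_mem (hcomb x hx y hy)]
        exact gauss_logconcave x y ht0' ht1'
      · rw [Set.indicator_of_notMem hy, ENNReal.zero_rpow_of_pos ht0', mul_zero]
        positivity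
    · rw [Set.indicator_of_notMem hx, ENNReal.zero_rpow_of_pos h1t, zero_mul]
      positivity
  rw [lintegral_indicator hKmeas, lintegral_indicator hLmeas, lintegral_indicator hWmeas] at hPL
  -- convert to real inequality
  have hmain : gaussianMeasure n K ^ (1 - t) * gaussianMeasure n L ^ t
      ≤ gaussianMeasure n W := by
    rw [hγ K, hγ L, hγ W]
    have hck : (0:ℝ) ≤ (∫⁻ x in K, φ x).toReal := ENNReal.toReal_nonneg
    have hcl : (0:ℝ) ≤ (∫⁻ x in L, φ x).toReal := ENNReal.toReal_nonneg
    rw [Real.mul_rpow hc_pos.le hck, Real.mul_rpow hc_pos.le hcl]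
    calc ((2 * Real.pi) ^ (-(n : ℝ) / 2)) ^ (1 - t) * (∫⁻ x in K, φ x).toReal ^ (1 - t)
        * (((2 * Real.pi) ^ (-(n : ℝ) / 2)) ^ t * (∫⁻ x in L, φ x).toReal ^ t)
        = (2 * Real.pi) ^ (-(n : ℝ) / 2)
          * ((∫⁻ x in K, φ x).toReal ^ (1 - t) * (∫⁻ x in L, φ x).toReal ^ t) := by
          rw [show ((2 * Real.pi) ^ (-(n : ℝ) / 2)) ^ (1 - t)
              * (∫⁻ x in K, φ x).toReal ^ (1 - t)
              * (((2 * Real.pi) ^ (-(n : ℝ) / 2)) ^ t * (∫⁻ x in L, φ x).toReal ^ t)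
            = ((2 * Real.pi) ^ (-(n : ℝ) / 2)) ^ (1 - t)
              * ((2 * Real.pi) ^ (-(n : ℝ) / 2)) ^ t
              * ((∫⁻ x in K, φ x).toReal ^ (1 - t) * (∫⁻ x in L, φ x).toReal ^ t) by ring]
          rw [← Real.rpow_add hc_pos]
          norm_num
      _ ≤ (2 * Real.pi) ^ (-(n : ℝ) / 2) * (∫⁻ x in W, φ x).toReal := by
          refine mul_le_mul_of_nonneg_left ?_ hc_pos.le
          rw [ENNReal.toReal_rpow, ENNReal.toReal_rpow, ← ENNReal.toReal_mul]
          exact ENNReal.toReal_mono (htop W) hPL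
  -- take logarithms
  have hγWpos : 0 < gaussianMeasure n W :=
    lt_of_lt_of_le (mul_pos (Real.rpow_pos_of_pos hγKpos _)
      (Real.rpow_pos_of_pos hγLpos _)) hmain
  have hlog := Real.log_le_log (mul_pos (Real.rpow_pos_of_pos hγKpos _)
    (Real.rpow_pos_of_pos hγLpos _)) hmain
  rw [Real.log_mul (Real.rpow_pos_of_pos hγKpos _).ne' (Real.rpow_pos_of_pos hγLpos _).ne',
    Real.log_rpow hγKpos, Real.log_rpow hγLpos] at hlog
  exact hlog
end

section
/- Let C ⊆ ℝⁿ be a pointed n-dimensional closed convex cone (n ≥ 2), let e ∈ S^{n-1} be such that −e ∈ int C°, and let p < n be a real number. Define s(t) = ∫_{C ∩ {x : ⟨x,e⟩ = t}} e^{-‖y‖²/2} dℋ^{n-1}(y) for t > 0. Then there exist real numbers t₁, t₂ with 0 < t₁ < t₂ such that t₁^{1-p} s(t₁) = t₂^{1-p} s(t₂) > 0; in particular, the function t ↦ t^{1-p} s(t) is not injective on (0,∞). -/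
open MeasureTheory Metric Set Filter
open scoped RealInnerProductSpace Pointwise Topology ENNReal

open Topology
open scoped NNReal

lemma aux_scaling_integral {m n : ℕ} (ψ : En m → En n) (hψ : Isometry ψ)
    {d : ℝ} (hd : 0 ≤ d) {t : ℝ} (ht : 0 < t) (B : Set (En m))
    (f : En n → ℝ) :
    ∫ y in (fun w => t • ψ w) '' B, f y ∂(μH[d]) =
      (t ^ d) * ∫ w in B, f (t • ψ w) ∂(μH[d]) := by
  set φ : En m → En n := fun w => t • ψ w with hφ
  have hφemb : IsClosedEmbedding φ :=
    (Homeomorph.smulOfNeZero t ht.ne').isClosedEmbedding.comp hψ.isClosedEmbedding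
  have hφme : MeasurableEmbedding φ := hφemb.measurableEmbedding
  have hkey : ∀ S : Set (En m), μH[d] (φ '' S) = ((‖t‖₊ ^ d : ℝ≥0) : ℝ≥0∞) * μH[d] S := by
    intro S
    have himg : φ '' S = t • (ψ '' S) := by
      ext x
      constructor
      · rintro ⟨w, hw, rfl⟩; exact ⟨ψ w, ⟨w, hw, rfl⟩, rfl⟩
      · rintro ⟨y, ⟨w, hw, rfl⟩, rfl⟩; exact ⟨w, hw, rfl⟩
    rw [himg, Measure.hausdorffMeasure_smul₀ hd ht.ne' (ψ '' S),
      hψ.hausdorffMeasure_image (Or.inl hd)]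
    simp [ENNReal.smul_def]
  have hrestr : (μH[d] : Measure (En n)).restrict (φ '' B) =
      Measure.map φ ((((‖t‖₊ ^ d : ℝ≥0) : ℝ≥0∞)) • (μH[d] : Measure (En m)).restrict B) := by
    ext S hS
    rw [Measure.restrict_apply hS, Measure.map_apply hφme.measurable hS,
      Measure.smul_apply, Measure.restrict_apply (hφme.measurable hS), smul_eq_mul, ← hkey]
    congr 1
    rw [Set.image_inter hφme.injective, Set.image_preimage_eq_inter_range,
      Set.inter_assoc, Set.inter_eq_right.2 (Set.image_subset_range φ B)]
  calc ∫ y in φ '' B, f y ∂(μH[d])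
      = ∫ y, f y ∂(Measure.map φ ((((‖t‖₊ ^ d : ℝ≥0) : ℝ≥0∞)) •
          (μH[d] : Measure (En m)).restrict B)) := by rw [← hrestr]
    _ = ∫ w, f (φ w) ∂((((‖t‖₊ ^ d : ℝ≥0) : ℝ≥0∞)) • (μH[d] : Measure (En m)).restrict B) :=
        hφme.integral_map _
    _ = ((‖t‖₊ ^ d : ℝ≥0) : ℝ≥0∞).toReal * ∫ w in B, f (φ w) ∂(μH[d]) := by
        rw [integral_smul_measure]; rfl
    _ = (t ^ d) * ∫ w in B, f (t • ψ w) ∂(μH[d]) := by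
        congr 1
        rw [ENNReal.coe_toReal, NNReal.coe_rpow, coe_nnnorm, Real.norm_eq_abs, abs_of_pos ht]


set_option maxHeartbeats 2000000 in
/-- For `p < n`, the function `t ↦ t^{1-p} s(t)`, where
`s(t) = ∫_{C ∩ {⟨x,e⟩ = t}} e^{-‖y‖²/2} dℋ^{n-1}(y)`, takes the same positive value at two
distinct points `0 < t₁ < t₂`; in particular it is not injective on `(0,∞)`. -/
theorem slice_density_not_injective {n : ℕ} (hn : 2 ≤ n) (C : Set (En n))
    (hC : IsPointedCone C) (e : En n) (he : e ∈ sphere (0 : En n) 1)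
    (hei : -e ∈ interior (polarCone C)) (p : ℝ) (hp : p < n) :
    (∃ t₁ t₂ : ℝ, 0 < t₁ ∧ t₁ < t₂ ∧
      t₁ ^ (1 - p) *
          (∫ y in C ∩ {x : En n | ⟪x, e⟫ = t₁}, Real.exp (-‖y‖ ^ 2 / 2) ∂(μH[(n : ℝ) - 1])) =
        t₂ ^ (1 - p) *
          (∫ y in C ∩ {x : En n | ⟪x, e⟫ = t₂}, Real.exp (-‖y‖ ^ 2 / 2) ∂(μH[(n : ℝ) - 1])) ∧
      0 < t₁ ^ (1 - p) *
          (∫ y in C ∩ {x : En n | ⟪x, e⟫ = t₁}, Real.exp (-‖y‖ ^ 2 / 2) ∂(μH[(n : ℝ) - 1]))) ∧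
    ¬ Set.InjOn
      (fun t : ℝ => t ^ (1 - p) *
        ∫ y in C ∩ {x : En n | ⟪x, e⟫ = t}, Real.exp (-‖y‖ ^ 2 / 2) ∂(μH[(n : ℝ) - 1]))
      (Set.Ioi 0) := by
  obtain ⟨hCc, hCconv, hCcone, ⟨x₀, hx₀⟩, hCp⟩ := hC
  have hee : ⟪e, e⟫ = 1 := by
    have : ‖e‖ = 1 := by simpa using he
    rw [real_inner_self_eq_norm_sq, this, one_pow]
  have he0 : e ≠ 0 := by
    intro h
    rw [h, inner_zero_left] at hee
    norm_num at hee
  -- coercivity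
  obtain ⟨ε₀, hε₀, hball⟩ : ∃ ε > 0, ball (-e) ε ⊆ polarCone C := by
    obtain ⟨ε, hε, h⟩ := Metric.mem_nhds_iff.1 (mem_interior_iff_mem_nhds.1 hei)
    exact ⟨ε, hε, h⟩
  set ε : ℝ := ε₀ / 2 with hεdef
  have hε : 0 < ε := by positivity
  have hcoer : ∀ x ∈ C, ε * ‖x‖ ≤ ⟪x, e⟫ := by
    intro x hx
    rcases eq_or_ne x 0 with rfl | hx0
    · simp
    · have hnx : (0:ℝ) < ‖x‖ := norm_pos_iff.2 hx0
      set u : En n := -e + (ε * ‖x‖⁻¹) • x with hu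
      have hu_mem : u ∈ polarCone C := by
        apply hball
        rw [mem_ball, dist_eq_norm]
        have : u - -e = (ε * ‖x‖⁻¹) • x := by rw [hu]; abel
        rw [this, norm_smul]
        have : ‖ε * ‖x‖⁻¹‖ = ε * ‖x‖⁻¹ := by
          rw [Real.norm_eq_abs, abs_of_pos]; positivity
        rw [this]
        have : ε * ‖x‖⁻¹ * ‖x‖ = ε := by field_simp
        rw [this]; rw [hεdef]; linarith
      have h0 : ⟪u, x⟫ ≤ 0 := hu_mem x hx
      rw [hu, inner_add_left, inner_neg_left, real_inner_smul_left,
        real_inner_self_eq_norm_sq] at h0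
      have hxx : ε * ‖x‖⁻¹ * ‖x‖ ^ 2 = ε * ‖x‖ := by
        field_simp
      rw [hxx] at h0
      have := real_inner_comm x e
      linarith [h0, this ▸ h0]
  -- the isometric parametrization of the hyperplane {⟪x,e⟫ = 1}
  haveI hfact : Fact (Module.finrank ℝ (En n) = (n - 1) + 1) :=
    ⟨by rw [finrank_euclideanSpace_fin]; omega⟩
  set b := OrthonormalBasis.fromOrthogonalSpanSingleton (𝕜 := ℝ) (n - 1) he0 with hb
  set L : En (n - 1) →ₗᵢ[ℝ] En n :=
    ((ℝ ∙ e)ᗮ.subtypeₗᵢ).comp b.repr.symm.toLinearIsometry with hL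
  have hLmem : ∀ w, (L w) ∈ (ℝ ∙ e)ᗮ := fun w => (b.repr.symm w).2
  set ψ : En (n - 1) → En n := fun w => e + L w with hψ
  have hψiso : Isometry ψ := by
    apply Isometry.of_dist_eq
    intro a c
    rw [hψ]
    simp only [dist_add_left]
    exact L.isometry.dist_eq a c
  have hψinner : ∀ w, ⟪ψ w, e⟫ = 1 := by
    intro w
    have h0 : ⟪e, L w⟫ = 0 :=
      Submodule.mem_orthogonal_singleton_iff_inner_right.mp (hLmem w)
    rw [hψ]
    simp only []
    have h0' : ⟪(L w : En n), e⟫ = (0:ℝ) := by rw [real_inner_comm]; exact h0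
    rw [inner_add_left, hee, h0', add_zero]
  have hψsurj : ∀ x : En n, ⟪x, e⟫ = 1 → ∃ w, ψ w = x := by
    intro x hx
    have hmem : x - e ∈ (ℝ ∙ e)ᗮ := by
      rw [Submodule.mem_orthogonal_singleton_iff_inner_right]
      have hx' : ⟪e, x⟫ = (1:ℝ) := by rw [real_inner_comm]; exact hx
      rw [inner_sub_right, hee, hx', sub_self]
    refine ⟨b.repr ⟨x - e, hmem⟩, ?_⟩
    rw [hψ]
    simp only []
    have : L (b.repr ⟨x - e, hmem⟩) = x - e := by
      rw [hL]
      simp only [LinearIsometry.coe_comp, Function.comp_apply,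
        LinearIsometryEquiv.coe_toLinearIsometry, LinearIsometryEquiv.symm_apply_apply]
      rfl
    rw [this]; abel
  have hψ1 : ∀ w, 1 ≤ ‖ψ w‖ := by
    intro w
    have := real_inner_le_norm (ψ w) e
    have h1 : ‖e‖ = 1 := by simpa using he
    rw [hψinner w, h1, mul_one] at this
    exact this
  -- the sets A and B
  set A : Set (En n) := C ∩ {x | ⟪x, e⟫ = 1} with hA
  set B : Set (En (n - 1)) := ψ ⁻¹' A with hB
  have hAB : ψ '' B = A := by
    apply Set.Subset.antisymm
    · rintro x ⟨w, hw, rfl⟩; exact hw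
    · intro x hx
      obtain ⟨w, rfl⟩ := hψsurj x hx.2
      exact ⟨w, hx, rfl⟩
  have hslice : ∀ t : ℝ, 0 < t → C ∩ {x | ⟪x, e⟫ = t} = (fun w => t • ψ w) '' B := by
    intro t ht
    have h1 : (fun w => t • ψ w) '' B = t • (ψ '' B) := by
      ext x
      constructor
      · rintro ⟨w, hw, rfl⟩; exact ⟨ψ w, ⟨w, hw, rfl⟩, rfl⟩
      · rintro ⟨y, ⟨w, hw, rfl⟩, rfl⟩; exact ⟨w, hw, rfl⟩
    rw [h1, hAB]
    ext x
    constructor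
    · rintro ⟨hxC, hxt⟩
      refine ⟨t⁻¹ • x, ⟨hCcone x hxC t⁻¹ (by positivity), ?_⟩, ?_⟩
      · show ⟪t⁻¹ • x, e⟫ = 1
        rw [real_inner_smul_left, hxt]
        field_simp
      · exact smul_inv_smul₀ ht.ne' x
    · rintro ⟨y, ⟨hyC, hy1⟩, rfl⟩
      refine ⟨hCcone y hyC t ht.le, ?_⟩
      show ⟪t • y, e⟫ = t
      rw [real_inner_smul_left, hy1, mul_one]
  -- compactness and measurability of B
  have hAbdd : A ⊆ closedBall 0 ε⁻¹ := by
    intro x hx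
    rw [mem_closedBall, dist_zero_right]
    have := hcoer x hx.1
    rw [hx.2] at this
    rw [inv_eq_one_div, le_div_iff₀ hε]
    linarith
  have hcont_inner : Continuous fun x : En n => ⟪x, e⟫ :=
    continuous_id.inner continuous_const
  have hAcl : IsClosed A :=
    hCc.inter (isClosed_eq hcont_inner continuous_const)
  have hBcl : IsClosed B := hAcl.preimage hψiso.continuous
  have hBbdd : Bornology.IsBounded B := by
    have : B ⊆ ψ ⁻¹' (closedBall 0 ε⁻¹) := fun w hw => hAbdd hw
    apply Bornology.IsBounded.subset _ this
    have hanti : AntilipschitzWith 1 ψ := hψiso.antilipschitz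
    exact hanti.isBounded_preimage (isBounded_closedBall)
  have hBc : IsCompact B := Metric.isCompact_of_isClosed_isBounded hBcl hBbdd
  have hBm : MeasurableSet B := hBcl.measurableSet
  -- Hausdorff measure on the parameter space is a Haar measure
  have hμ'eq : (μH[(n:ℝ)-1] : Measure (En (n-1))) =
      μH[((Module.finrank ℝ (En (n-1)) : ℕ) : ℝ)] := by
    congr 1
    rw [finrank_euclideanSpace_fin, Nat.cast_sub (by omega : 1 ≤ n), Nat.cast_one]
  have hBfin : μH[(n:ℝ)-1] B < ⊤ := by
    rw [hμ'eq]
    exact hBc.measure_lt_top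
  -- positivity of the measure of B
  have hx₀ne : x₀ ≠ 0 := by
    rintro rfl
    obtain ⟨r, hr, hball0⟩ := Metric.isOpen_iff.1 isOpen_interior 0 hx₀
    have heC : (r/2) • e ∈ C := by
      apply interior_subset; apply hball0
      rw [mem_ball, dist_zero_right, norm_smul, Real.norm_eq_abs,
        abs_of_pos (by linarith), show ‖e‖ = 1 by simpa using he, mul_one]
      linarith
    have heC' : -((r/2) • e) ∈ C := by
      apply interior_subset; apply hball0
      rw [mem_ball, dist_zero_right, norm_neg, norm_smul, Real.norm_eq_abs,
        abs_of_pos (by linarith), show ‖e‖ = 1 by simpa using he, mul_one]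
      linarith
    have := hCp _ heC heC'
    have h2 : (r/2) ≠ (0:ℝ) := by linarith
    exact he0 (by simpa [smul_eq_zero, h2] using this)
  have hτ : 0 < ⟪x₀, e⟫ := by
    have h1 := hcoer x₀ (interior_subset hx₀)
    have h2 : 0 < ‖x₀‖ := norm_pos_iff.2 hx₀ne
    nlinarith
  set y₀ : En n := (⟪x₀, e⟫)⁻¹ • x₀ with hy₀
  have hy₀int : y₀ ∈ interior C := by
    have hCsub : (⟪x₀, e⟫)⁻¹ • C ⊆ C := by
      rintro z ⟨x, hx, rfl⟩
      exact hCcone x hx _ (by positivity)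
    have : y₀ ∈ (⟪x₀, e⟫)⁻¹ • interior C := ⟨x₀, hx₀, rfl⟩
    rw [← interior_smul₀ (by positivity : (⟪x₀, e⟫)⁻¹ ≠ 0)] at this
    exact interior_mono hCsub this
  have hy₀1 : ⟪y₀, e⟫ = 1 := by
    rw [hy₀, real_inner_smul_left, inv_mul_cancel₀ hτ.ne']
  obtain ⟨δ, hδ, hδball⟩ := Metric.isOpen_iff.1 isOpen_interior y₀ hy₀int
  obtain ⟨v₀, hv₀⟩ := hψsurj y₀ hy₀1
  have hball_sub : ball v₀ δ ⊆ B := by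
    intro w hw
    have hdist : dist (ψ w) y₀ < δ := by
      rw [← hv₀, hψiso.dist_eq]; exact hw
    refine ⟨interior_subset (hδball hdist), hψinner w⟩
  have hBpos : 0 < μH[(n:ℝ)-1] B := by
    rw [hμ'eq]
    calc (0:ℝ≥0∞) < μH[((Module.finrank ℝ (En (n-1)) : ℕ) : ℝ)] (ball v₀ δ) :=
          measure_ball_pos _ v₀ hδ
      _ ≤ _ := measure_mono hball_sub
  -- the analytic part
  set K : ℝ := (μH[(n:ℝ)-1] B).toReal with hKdef
  have hK : 0 < K := ENNReal.toReal_pos hBpos.ne' hBfin.ne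
  haveI hfinB : IsFiniteMeasure ((μH[(n:ℝ)-1] : Measure (En (n-1))).restrict B) :=
    ⟨by rwa [Measure.restrict_apply_univ]⟩
  set φfun : ℝ → ℝ :=
    fun t => ∫ w in B, Real.exp (-(t^2 * ‖ψ w‖^2) / 2) ∂(μH[(n:ℝ)-1]) with hφfun
  have hcontw : ∀ t : ℝ, Continuous fun w : En (n-1) => Real.exp (-(t^2 * ‖ψ w‖^2) / 2) := by
    intro t
    exact Real.continuous_exp.comp
      (((continuous_const.mul ((hψiso.continuous.norm).pow 2)).neg).div_const 2)
  have hexp_le_one : ∀ (t : ℝ) (w : En (n-1)), Real.exp (-(t^2 * ‖ψ w‖^2) / 2) ≤ 1 := by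
    intro t w
    rw [Real.exp_le_one_iff]
    have : (0:ℝ) ≤ t^2 * ‖ψ w‖^2 := by positivity
    linarith
  have hint : ∀ t : ℝ,
      IntegrableOn (fun w => Real.exp (-(t^2 * ‖ψ w‖^2) / 2)) B (μH[(n:ℝ)-1]) := by
    intro t
    refine (integrable_const 1).mono' ((hcontw t).aestronglyMeasurable) ?_
    refine ae_of_all _ fun w => ?_
    rw [Real.norm_eq_abs, abs_of_pos (Real.exp_pos _)]
    exact hexp_le_one t w
  have hφ_nonneg : ∀ t, 0 ≤ φfun t :=
    fun t => integral_nonneg fun w => (Real.exp_pos _).le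
  have hφ_exp_le : ∀ t : ℝ, φfun t ≤ Real.exp (-(t^2) / 2) * K := by
    intro t
    have h1 : φfun t ≤ ∫ _ in B, Real.exp (-(t^2) / 2) ∂(μH[(n:ℝ)-1]) := by
      refine integral_mono (hint t) (integrable_const _) fun w => ?_
      apply Real.exp_le_exp.2
      have h2 : (1:ℝ) ≤ ‖ψ w‖^2 := by nlinarith [hψ1 w, norm_nonneg (ψ w)]
      have h3 : t^2 * 1 ≤ t^2 * ‖ψ w‖^2 := by nlinarith [sq_nonneg t]
      nlinarith
    rw [setIntegral_const] at h1
    calc φfun t ≤ (μH[(n:ℝ)-1] B).toReal • Real.exp (-(t^2) / 2) := h1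
      _ = Real.exp (-(t^2) / 2) * K := by rw [smul_eq_mul, mul_comm, hKdef]
  have hφ_le : ∀ t : ℝ, φfun t ≤ K := by
    intro t
    have h1 : φfun t ≤ ∫ _ in B, (1:ℝ) ∂(μH[(n:ℝ)-1]) :=
      integral_mono (hint t) (integrable_const _) fun w => hexp_le_one t w
    rw [setIntegral_const, smul_eq_mul, mul_one] at h1
    exact h1
  have hφcont : Continuous φfun := by
    refine continuous_of_dominated (fun t => (hcontw t).aestronglyMeasurable)
      (fun t => ae_of_all _ fun w => ?_) (integrable_const 1) (ae_of_all _ fun w => ?_)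
    · rw [Real.norm_eq_abs, abs_of_pos (Real.exp_pos _)]
      exact hexp_le_one t w
    · exact Real.continuous_exp.comp
        ((((continuous_pow 2).mul continuous_const).neg).div_const 2)
  have hφ1pos : 0 < φfun 1 := by
    obtain ⟨wm, hwmB, hwm'⟩ := hBc.exists_isMaxOn ⟨v₀, hball_sub (mem_ball_self hδ)⟩
      (hψiso.continuous.norm.continuousOn)
    have hwm : ∀ w ∈ B, ‖ψ w‖ ≤ ‖ψ wm‖ := fun w hw => hwm' hw
    set c : ℝ := Real.exp (-((‖ψ wm‖)^2) / 2) with hc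
    have hle : c * K ≤ φfun 1 := by
      refine setIntegral_ge_of_const_le_real hBm hBfin.ne (fun w hw => ?_) (hint 1)
      apply Real.exp_le_exp.2
      have h1 : ‖ψ w‖ ≤ ‖ψ wm‖ := hwm w hw
      have h2 : ‖ψ w‖^2 ≤ ‖ψ wm‖^2 := by nlinarith [norm_nonneg (ψ w)]
      nlinarith
    have : 0 < c * K := mul_pos (Real.exp_pos _) hK
    linarith
  -- the rescaled profile function G
  set q : ℝ := (n:ℝ) - p with hq
  have hqpos : 0 < q := by rw [hq]; linarith
  set G : ℝ → ℝ := fun t => t ^ q * φfun t with hG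
  have hd0 : (0:ℝ) ≤ (n:ℝ) - 1 := by
    have : (2:ℝ) ≤ (n:ℝ) := by exact_mod_cast hn
    linarith
  have hGbridge : ∀ t : ℝ, 0 < t →
      t ^ (1-p) * (∫ y in C ∩ {x : En n | ⟪x, e⟫ = t},
        Real.exp (-‖y‖ ^ 2 / 2) ∂(μH[(n:ℝ)-1])) = G t := by
    intro t ht
    rw [hslice t ht,
      aux_scaling_integral ψ hψiso hd0 ht B (fun y => Real.exp (-‖y‖ ^ 2 / 2))]
    have hinteq : (fun w => Real.exp (-‖t • ψ w‖ ^ 2 / 2)) =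
        fun w => Real.exp (-(t^2 * ‖ψ w‖^2) / 2) := by
      funext w
      rw [norm_smul, Real.norm_eq_abs, mul_pow, sq_abs]
    rw [show (∫ w in B, Real.exp (-‖t • ψ w‖ ^ 2 / 2) ∂(μH[(n:ℝ)-1])) = φfun t by
      rw [hφfun]; exact congrArg _ (by rw [hinteq])]
    rw [hG, ← mul_assoc, ← Real.rpow_add ht]
    congr 2
    rw [hq]; ring
  have hG1 : G 1 = φfun 1 := by rw [hG]; simp [Real.one_rpow]
  have hGCA : ∀ t : ℝ, 0 < t → ContinuousAt G t := by
    intro t ht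
    exact ((Real.continuousAt_rpow_const t q (Or.inl ht.ne')).mul hφcont.continuousAt)
  -- limit at 0⁺
  have hrpow0 : Tendsto (fun t : ℝ => t ^ q) (𝓝[>] 0) (𝓝 0) := by
    have hca : ContinuousAt (fun t : ℝ => t ^ q) 0 :=
      Real.continuousAt_rpow_const 0 q (Or.inr hqpos.le)
    have := hca.tendsto
    rw [Real.zero_rpow hqpos.ne'] at this
    exact this.mono_left nhdsWithin_le_nhds
  have hG0 : Tendsto G (𝓝[>] 0) (𝓝 0) := by
    have hφt : Tendsto φfun (𝓝[>] 0) (𝓝 (φfun 0)) :=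
      (hφcont.continuousAt.tendsto).mono_left nhdsWithin_le_nhds
    have := hrpow0.mul hφt
    rw [zero_mul] at this
    exact this
  -- limit at +∞
  have hGtop : Tendsto G atTop (𝓝 0) := by
    have hmaj : Tendsto (fun t : ℝ => t ^ q * Real.exp (-(t^2) / 2) * K) atTop (𝓝 0) := by
      have hbase : Tendsto (fun t : ℝ => t ^ q * Real.exp (-1 * t)) atTop (𝓝 0) :=
        tendsto_rpow_mul_exp_neg_mul_atTop_nhds_zero q 1 one_pos
      have hsq : Tendsto (fun t : ℝ => t ^ q * Real.exp (-(t^2) / 2)) atTop (𝓝 0) := by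
        apply squeeze_zero' ?_ ?_ hbase
        · filter_upwards [eventually_gt_atTop 0] with t ht
          positivity
        · filter_upwards [eventually_ge_atTop 2] with t ht
          have h1 : t ≤ t^2 / 2 := by nlinarith
          have h2 : Real.exp (-(t^2) / 2) ≤ Real.exp (-1 * t) := by
            apply Real.exp_le_exp.2; linarith
          have h3 : (0:ℝ) ≤ t ^ q := Real.rpow_nonneg (by linarith) q
          nlinarith [mul_le_mul_of_nonneg_left h2 h3]
      have := hsq.mul_const K
      rwa [zero_mul] at this
    apply squeeze_zero' ?_ ?_ hmaj
    · filter_upwards [eventually_gt_atTop 0] with t ht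
      exact mul_nonneg (Real.rpow_nonneg ht.le q) (hφ_nonneg t)
    · filter_upwards [eventually_gt_atTop 0] with t ht
      rw [hG, mul_assoc]
      exact mul_le_mul_of_nonneg_left (hφ_exp_le t) (Real.rpow_nonneg ht.le q)
  -- choose the level ε' and points a, b
  set ε' : ℝ := φfun 1 / 2 with hε'
  have hε'pos : 0 < ε' := by rw [hε']; linarith
  obtain ⟨a, haG, ha0, ha1⟩ : ∃ a : ℝ, G a < ε' ∧ 0 < a ∧ a < 1 := by
    have h1 : ∀ᶠ t in 𝓝[>] (0:ℝ), G t < ε' := by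
      have := hG0 (Iio_mem_nhds hε'pos)
      exact this
    have h2 : ∀ᶠ t in 𝓝[>] (0:ℝ), t < 1 :=
      eventually_nhdsWithin_of_eventually_nhds (Filter.Tendsto.eventually_lt_const one_pos
        Filter.tendsto_id)
    have h3 : ∀ᶠ t in 𝓝[>] (0:ℝ), 0 < t := self_mem_nhdsWithin
    obtain ⟨a, h4, h6⟩ := ((h1.and h3).and h2).exists
    exact ⟨a, h4.1, h4.2, h6⟩
  obtain ⟨bb, hbG, hb1⟩ : ∃ bb : ℝ, G bb < ε' ∧ 1 < bb := by
    have h1 : ∀ᶠ t in atTop, G t < ε' := by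
      have := hGtop (Iio_mem_nhds hε'pos)
      simpa [Set.mem_Iio] using this
    obtain ⟨bb, h2, h3⟩ := (h1.and (eventually_gt_atTop 1)).exists
    exact ⟨bb, h2, h3⟩
  -- IVT
  have hco1 : ContinuousOn G (Icc a 1) := fun t ht =>
    (hGCA t (lt_of_lt_of_le ha0 ht.1)).continuousWithinAt
  have hco2 : ContinuousOn G (Icc 1 bb) := fun t ht =>
    (hGCA t (lt_of_lt_of_le one_pos ht.1)).continuousWithinAt
  obtain ⟨t₁, ht₁mem, ht₁⟩ := intermediate_value_Icc ha1.le hco1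
    (⟨haG.le, by rw [hG1]; rw [hε']; linarith⟩ : ε' ∈ Icc (G a) (G 1))
  obtain ⟨t₂, ht₂mem, ht₂⟩ := intermediate_value_Icc' hb1.le hco2
    (⟨hbG.le, by rw [hG1]; rw [hε']; linarith⟩ : ε' ∈ Icc (G bb) (G 1))
  have ht₁pos : 0 < t₁ := lt_of_lt_of_le ha0 ht₁mem.1
  have ht₂pos : 0 < t₂ := lt_of_lt_of_le one_pos ht₂mem.1
  have hne : t₁ ≠ t₂ := by
    intro h
    have h1 : t₁ = 1 := le_antisymm ht₁mem.2 (h ▸ ht₂mem.1)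
    rw [h1, hG1] at ht₁
    rw [hε'] at ht₁
    linarith
  have hlt : t₁ < t₂ := lt_of_le_of_ne (le_trans ht₁mem.2 ht₂mem.1) hne
  refine ⟨⟨t₁, t₂, ht₁pos, hlt, ?_, ?_⟩, ?_⟩
  · rw [hGbridge t₁ ht₁pos, hGbridge t₂ ht₂pos, ht₁, ht₂]
  · rw [hGbridge t₁ ht₁pos, ht₁]; exact hε'pos
  · intro hinj
    have := hinj (mem_Ioi.2 ht₁pos) (mem_Ioi.2 ht₂pos) (by
      simp only []
      rw [hGbridge t₁ ht₁pos, hGbridge t₂ ht₂pos, ht₁, ht₂])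
    exact hne this
end
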